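/- Let A be an n×n matrix over a totally ordered commutative group and c ∈ M^n a vector of nonnegative entries. Then there exists a unique minimal canon of A subject to the constraints ℓ_i ≥ c_i for all i, and it equals λ' + c where λ' is the minimal canon of the matrix A + c. -/

import Mathlib

/-- `ℓ` is a canon for the `n × n` matrix `A`: `ℓ` is nonnegative and `A + ℓ`
possesses `n` transversal column-maxima. -/
def IsCanon {n : ℕ} {M : Type*} [AddCommGroup M] [LinearOrder M] [IsOrderedAddMonoid M]
    (A : Fin n → Fin n → M) (ℓ : Fin n → M) : Prop :=
  (∀ i, 0 ≤ ℓ i) ∧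
    ∃ σ : Equiv.Perm (Fin n), ∀ i i', A i' (σ i) + ℓ i' ≤ A i (σ i) + ℓ i

/-- Minimal canon subject to lower bounds: if `λ'` is the minimal canon of the
matrix `A + c` (entries `a_{i,j} + c_i`), where `c` is nonnegative, then
`λ' + c` is the least canon of `A` subject to `ℓ ≥ c`; in particular a unique
minimal such canon exists and equals `λ' + c`. -/
theorem minimal_canon_subject_to_bounds {n : ℕ} {M : Type*}
    [AddCommGroup M] [LinearOrder M] [IsOrderedAddMonoid M] (A : Fin n → Fin n → M)
    (c : Fin n → M) (hc : ∀ i, 0 ≤ c i) (lam' : Fin n → M)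
    (h1 : IsCanon (fun i j => A i j + c i) lam')
    (h2 : ∀ m, IsCanon (fun i j => A i j + c i) m → lam' ≤ m) :
    IsLeast {ℓ | IsCanon A ℓ ∧ ∀ i, c i ≤ ℓ i} (fun i => lam' i + c i) ∧
      ∀ m ∈ {ℓ | IsCanon A ℓ ∧ ∀ i, c i ≤ ℓ i},
        (∀ m' ∈ {ℓ | IsCanon A ℓ ∧ ∀ i, c i ≤ ℓ i}, m' ≤ m → m' = m) →
          m = fun i => lam' i + c i := by
  obtain ⟨hnn, σ, hσ⟩ := h1
  have hmem : (fun i => lam' i + c i) ∈ {ℓ | IsCanon A ℓ ∧ ∀ i, c i ≤ ℓ i} := by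
    refine ⟨⟨fun i => add_nonneg (hnn i) (hc i), σ, fun i i' => ?_⟩,
      fun i => le_add_of_nonneg_left (hnn i)⟩
    have h := hσ i i'
    simp only at h
    calc A i' (σ i) + (lam' i' + c i') = A i' (σ i) + c i' + lam' i' := by abel
      _ ≤ A i (σ i) + c i + lam' i := h
      _ = A i (σ i) + (lam' i + c i) := by abel
  have hlb : ∀ ℓ ∈ {ℓ | IsCanon A ℓ ∧ ∀ i, c i ≤ ℓ i},
      (fun i => lam' i + c i) ≤ ℓ := by
    rintro ℓ ⟨⟨hℓnn, τ, hτ⟩, hℓc⟩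
    have : IsCanon (fun i j => A i j + c i) (fun i => ℓ i - c i) := by
      refine ⟨fun i => by simpa using sub_nonneg.2 (hℓc i), τ, fun i i' => ?_⟩
      have h := hτ i i'
      simp only
      calc A i' (τ i) + c i' + (ℓ i' - c i') = A i' (τ i) + ℓ i' := by abel
        _ ≤ A i (τ i) + ℓ i := h
        _ = A i (τ i) + c i + (ℓ i - c i) := by abel
    have := h2 _ this
    intro i
    have h := this i
    simp only at h ⊢
    exact add_le_of_le_sub_right h
  refine ⟨⟨hmem, hlb⟩, fun m hm hmin => (hmin _ hmem (hlb m hm)).symm⟩
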